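/- The entropic uncertainty relation for a full set of mutually unbiased bases: if B_1, …, B_{d+1} are d+1 pairwise mutually unbiased orthonormal bases of ℂ^d, then for every density matrix ρ on ℂ^d, (1/(d+1)) Σ_{i=1}^{d+1} H(B_i | ρ) ≥ log₂(d+1) - 1, where H(B_i | ρ) is the Shannon entropy of the outcome distribution (⟨b|ρ|b⟩)_{b ∈ B_i}. -/

import Mathlib

open scoped InnerProductSpace
open Finset

noncomputable def vecOp {d : ℕ} (f : Fin d → EuclideanSpace ℂ (Fin d)) :
    EuclideanSpace ℂ (Fin d × Fin d) :=
  (WithLp.equiv 2 _).symm fun kl =>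
    ⟪EuclideanSpace.basisFun (Fin d) ℂ kl.1, f kl.2⟫_ℂ

lemma aux_vec {d : ℕ} (f g : Fin d → EuclideanSpace ℂ (Fin d)) :
    ⟪vecOp f, vecOp g⟫_ℂ = ∑ l, ⟪f l, g l⟫_ℂ := by
  rw [vecOp, vecOp, PiLp.inner_apply, Fintype.sum_prod_type, Finset.sum_comm]
  congr 1
  ext l
  simp only [WithLp.equiv_symm_apply, WithLp.ofLp_toLp, RCLike.inner_apply]
  simp_rw [mul_comm _ ((starRingEnd ℂ) _)]
  calc ∑ k, (starRingEnd ℂ) ⟪EuclideanSpace.basisFun (Fin d) ℂ k, f l⟫_ℂ *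
        ⟪EuclideanSpace.basisFun (Fin d) ℂ k, g l⟫_ℂ
      = ∑ k, ⟪f l, EuclideanSpace.basisFun (Fin d) ℂ k⟫_ℂ *
        ⟪EuclideanSpace.basisFun (Fin d) ℂ k, g l⟫_ℂ := by
        simp [inner_conj_symm]
    _ = ⟪f l, g l⟫_ℂ := OrthonormalBasis.sum_inner_mul_inner _ _ _

lemma aux_trace {d : ℕ} (b : OrthonormalBasis (Fin d) ℂ (EuclideanSpace ℂ (Fin d)))
    (A : EuclideanSpace ℂ (Fin d) →ₗ[ℂ] EuclideanSpace ℂ (Fin d)) :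
    LinearMap.trace ℂ _ A = ∑ x, ⟪b x, A (b x)⟫_ℂ := by
  rw [LinearMap.trace_eq_matrix_trace ℂ b.toBasis, Matrix.trace]
  congr 1
  ext x
  rw [Matrix.diag_apply, LinearMap.toMatrix_apply, OrthonormalBasis.coe_toBasis,
    OrthonormalBasis.coe_toBasis_repr_apply, OrthonormalBasis.repr_apply_apply]

lemma aux_purity {d : ℕ} (ρ : EuclideanSpace ℂ (Fin d) →ₗ[ℂ] EuclideanSpace ℂ (Fin d))
    (hsym : LinearMap.IsSymmetric ρ)
    (hpos : ∀ v, 0 ≤ (⟪v, ρ v⟫_ℂ).re)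
    (htr : LinearMap.trace ℂ _ ρ = 1) :
    (LinearMap.trace ℂ _ (ρ ∘ₗ ρ)).re ≤ 1 := by
  have hfin : Module.finrank ℂ (EuclideanSpace ℂ (Fin d)) = d := by
    simp [finrank_euclideanSpace]
  let b := hsym.eigenvectorBasis hfin
  let μ := hsym.eigenvalues hfin
  have happ : ∀ k, ρ (b k) = (μ k : ℂ) • b k := fun k => hsym.apply_eigenvectorBasis hfin k
  have hnorm : ∀ k, ⟪b k, b k⟫_ℂ = 1 := fun k => by
    rw [inner_self_eq_norm_sq_to_K, b.orthonormal.1 k]; norm_num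
  have htrρ : ∑ k, μ k = 1 := by
    have h := aux_trace b ρ
    rw [htr] at h
    have h2 : (1:ℂ) = ∑ k, (μ k : ℂ) := by
      rw [h]; congr 1; ext k; rw [happ, inner_smul_right, hnorm, mul_one]
    have := congrArg Complex.re h2.symm
    simpa using this
  have hμ0 : ∀ k, 0 ≤ μ k := by
    intro k
    have := hpos (b k)
    rw [happ, inner_smul_right, hnorm, mul_one] at this
    simpa using this
  have htr2 : (LinearMap.trace ℂ _ (ρ ∘ₗ ρ)).re = ∑ k, μ k ^ 2 := by
    rw [aux_trace b]
    have h3 : ∀ k, ⟪b k, (ρ ∘ₗ ρ) (b k)⟫_ℂ = ((μ k : ℂ))^2 := by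
      intro k
      simp only [LinearMap.comp_apply, happ, map_smul, inner_smul_right, hnorm]
      ring
    have h4 : ∀ k : Fin d, ((μ k : ℂ) ^ 2).re = μ k ^ 2 := by
      intro k
      rw [← Complex.ofReal_pow, Complex.ofReal_re]
    simp only [Complex.re_sum, h3, h4, Complex.one_re]
  rw [htr2]
  calc ∑ k, μ k ^ 2 ≤ (∑ k, μ k) ^ 2 :=
        Finset.sum_sq_le_sq_sum_of_nonneg (fun k _ => hμ0 k)
    _ = 1 := by rw [htrρ]; norm_num

lemma aux_mub {d : ℕ} (hd : 1 ≤ d)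
    (B : Fin (d + 1) → OrthonormalBasis (Fin d) ℂ (EuclideanSpace ℂ (Fin d)))
    (hMUB : ∀ i j, i ≠ j → ∀ x y, ‖⟪B i x, B j y⟫_ℂ‖ ^ 2 = 1 / d)
    (ρ : EuclideanSpace ℂ (Fin d) →ₗ[ℂ] EuclideanSpace ℂ (Fin d))
    (hsym : LinearMap.IsSymmetric ρ)
    (hpos : ∀ v, 0 ≤ (⟪v, ρ v⟫_ℂ).re)
    (htr : LinearMap.trace ℂ _ ρ = 1) :
    ∑ i, ∑ x, ((⟪B i x, ρ (B i x)⟫_ℂ).re)^2 ≤ 2 := by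
  have hd0 : (d:ℝ) ≠ 0 := Nat.cast_ne_zero.mpr (by omega)
  set e := EuclideanSpace.basisFun (Fin d) ℂ with he
  set p : Fin (d+1) → Fin d → ℝ := fun i x => (⟪B i x, ρ (B i x)⟫_ℂ).re with hpdef
  set q : Fin (d+1) → Fin d → ℝ := fun i x => p i x - 1/d with hqdef
  have hreal : ∀ (v : EuclideanSpace ℂ (Fin d)), ⟪v, ρ v⟫_ℂ = ((⟪v, ρ v⟫_ℂ).re : ℂ) := by
    intro v
    rw [eq_comm]
    rw [← Complex.conj_eq_iff_re]
    rw [inner_conj_symm, hsym v v]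
  have hp1 : ∀ i, ∑ x, p i x = 1 := by
    intro i
    have h := aux_trace (B i) ρ
    rw [htr] at h
    have h2 := congrArg Complex.re h
    rw [Complex.re_sum] at h2
    simp only [hpdef]
    simpa using h2.symm
  have hq0 : ∀ i, ∑ x, q i x = 0 := by
    intro i
    simp only [hqdef, Finset.sum_sub_distrib, hp1]
    simp [Finset.card_fin]
    field_simp
    norm_num
  -- the vectors
  set a := vecOp (fun l => ρ (e l)) with ha
  set b0 := vecOp (fun l => (e l : EuclideanSpace ℂ (Fin d))) with hb0
  set P : Fin (d+1) → Fin d → EuclideanSpace ℂ (Fin d × Fin d) :=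
    fun i x => vecOp (fun l => ⟪B i x, e l⟫_ℂ • B i x) with hPdef
  have h_ba : ⟪b0, a⟫_ℂ = 1 := by
    rw [hb0, ha, aux_vec, ← aux_trace e ρ, htr]
  have h_ab : ⟪a, b0⟫_ℂ = 1 := by
    rw [← inner_conj_symm, h_ba]; simp
  have h_bb : ⟪b0, b0⟫_ℂ = (d : ℂ) := by
    rw [hb0, aux_vec]
    have : ∀ l : Fin d, ⟪(e l : EuclideanSpace ℂ (Fin d)), e l⟫_ℂ = 1 := by
      intro l
      rw [inner_self_eq_norm_sq_to_K, e.orthonormal.1 l]; norm_num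
    simp [this]
  have h_aP : ∀ i x, ⟪a, P i x⟫_ℂ = (p i x : ℂ) := by
    intro i x
    rw [ha, hPdef, aux_vec]
    calc ∑ l, ⟪ρ (e l), ⟪B i x, e l⟫_ℂ • B i x⟫_ℂ
        = ∑ l, ⟪B i x, e l⟫_ℂ * ⟪e l, ρ (B i x)⟫_ℂ := by
          congr 1; ext l
          rw [inner_smul_right, hsym (e l) (B i x)]
      _ = ⟪B i x, ρ (B i x)⟫_ℂ := OrthonormalBasis.sum_inner_mul_inner e _ _
      _ = (p i x : ℂ) := hreal _
  have h_Pa : ∀ i x, ⟪P i x, a⟫_ℂ = (p i x : ℂ) := by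
    intro i x
    rw [← inner_conj_symm, h_aP]; simp
  have h_bP : ∀ i x, ⟪b0, P i x⟫_ℂ = 1 := by
    intro i x
    rw [hb0, hPdef, aux_vec]
    calc ∑ l, ⟪(e l : EuclideanSpace ℂ (Fin d)), ⟪B i x, e l⟫_ℂ • B i x⟫_ℂ
        = ∑ l, ⟪B i x, e l⟫_ℂ * ⟪e l, B i x⟫_ℂ := by
          congr 1; ext l; rw [inner_smul_right]
      _ = ⟪B i x, B i x⟫_ℂ := OrthonormalBasis.sum_inner_mul_inner e _ _
      _ = 1 := by rw [inner_self_eq_norm_sq_to_K, (B i).orthonormal.1 x]; norm_num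
  have h_Pb : ∀ i x, ⟪P i x, b0⟫_ℂ = 1 := by
    intro i x
    rw [← inner_conj_symm, h_bP]; simp
  have h_PP : ∀ i x j y, ⟪P i x, P j y⟫_ℂ = ((‖⟪B i x, B j y⟫_ℂ‖^2 : ℝ) : ℂ) := by
    intro i x j y
    rw [hPdef, aux_vec]
    calc ∑ l, ⟪⟪B i x, e l⟫_ℂ • B i x, ⟪B j y, e l⟫_ℂ • B j y⟫_ℂ
        = ∑ l, ⟪B j y, e l⟫_ℂ * ⟪e l, B i x⟫_ℂ * ⟪B i x, B j y⟫_ℂ := by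
          congr 1; ext l
          rw [inner_smul_left, inner_smul_right, inner_conj_symm]
          ring
      _ = (∑ l, ⟪B j y, e l⟫_ℂ * ⟪e l, B i x⟫_ℂ) * ⟪B i x, B j y⟫_ℂ := by
          rw [Finset.sum_mul]
      _ = ⟪B j y, B i x⟫_ℂ * ⟪B i x, B j y⟫_ℂ := by
          rw [OrthonormalBasis.sum_inner_mul_inner e]
      _ = ((‖⟪B i x, B j y⟫_ℂ‖^2 : ℝ) : ℂ) := by
          rw [mul_comm, ← inner_conj_symm (B j y) (B i x), RCLike.mul_conj]
          norm_cast
  set w : EuclideanSpace ℂ (Fin d × Fin d) := ∑ i, ∑ x, ((q i x : ℂ)) • P i x with hw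
  set S : ℝ := ∑ i, ∑ x, (q i x)^2 with hS
  have h_aw : ⟪a, w⟫_ℂ = ((∑ i, ∑ x, q i x * p i x : ℝ) : ℂ) := by
    rw [hw]
    simp only [inner_sum, inner_smul_right, h_aP]
    push_cast
    rfl
  have h_wa : ⟪w, a⟫_ℂ = ((∑ i, ∑ x, q i x * p i x : ℝ) : ℂ) := by
    rw [← inner_conj_symm, h_aw]; simp
  have h_bw : ⟪b0, w⟫_ℂ = 0 := by
    rw [hw]
    simp only [inner_sum, inner_smul_right, h_bP, mul_one]
    push_cast
    norm_cast
    simp [hq0]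
  have h_wb : ⟪w, b0⟫_ℂ = 0 := by
    rw [← inner_conj_symm, h_bw]; simp
  -- the real double-sum identity
  have horth : ∀ (i : Fin (d+1)) (x y : Fin d),
      ‖⟪B i x, B i y⟫_ℂ‖^2 = if x = y then 1 else 0 := by
    intro i x y
    rw [orthonormal_iff_ite.mp (B i).orthonormal]
    by_cases h : x = y <;> simp [h]
  have hreal_ww : ∑ i, ∑ j, ∑ x, ∑ y,
      q i x * q j y * ‖⟪B i x, B j y⟫_ℂ‖^2 = S := by
    rw [hS]
    apply Finset.sum_congr rfl
    intro i _
    rw [Finset.sum_eq_single i]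
    · calc ∑ x, ∑ y, q i x * q i y * ‖⟪B i x, B i y⟫_ℂ‖^2
          = ∑ x, ∑ y, (if x = y then q i x * q i y else 0) := by
            apply Finset.sum_congr rfl; intro x _
            apply Finset.sum_congr rfl; intro y _
            rw [horth]
            by_cases h : x = y <;> simp [h]
        _ = ∑ x, q i x ^ 2 := by
            apply Finset.sum_congr rfl; intro x _
            rw [Finset.sum_ite_eq univ x (fun y => q i x * q i y)]
            simp [sq]
    · intro j _ hj
      have hMUB' : ∀ x y, ‖⟪B i x, B j y⟫_ℂ‖^2 = 1/d := fun x y => hMUB i j (Ne.symm hj) x y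
      calc ∑ x, ∑ y, q i x * q j y * ‖⟪B i x, B j y⟫_ℂ‖^2
          = ∑ x, ∑ y, q i x * q j y * (1/d) := by
            apply Finset.sum_congr rfl; intro x _
            apply Finset.sum_congr rfl; intro y _
            rw [hMUB']
        _ = (∑ x, q i x) * (∑ y, q j y) * (1/d) := by
            rw [Finset.sum_mul_sum]
            rw [Finset.sum_mul]
            apply Finset.sum_congr rfl; intro x _
            rw [Finset.sum_mul]
        _ = 0 := by rw [hq0, hq0]; ring
    · intro h; exact absurd (Finset.mem_univ i) h
  have hPw : ∀ i x, ⟪P i x, w⟫_ℂ =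
      ((∑ j, ∑ y, q j y * ‖⟪B i x, B j y⟫_ℂ‖^2 : ℝ) : ℂ) := by
    intro i x
    rw [hw]
    simp only [inner_sum, inner_smul_right, h_PP]
    push_cast
    rfl
  have hreal_ww2 : (∑ i, ∑ x, q i x * (∑ j, ∑ y, q j y * ‖⟪B i x, B j y⟫_ℂ‖^2)) = S := by
    calc ∑ i, ∑ x, q i x * (∑ j, ∑ y, q j y * ‖⟪B i x, B j y⟫_ℂ‖^2)
        = ∑ i, ∑ j, ∑ x, ∑ y, q i x * q j y * ‖⟪B i x, B j y⟫_ℂ‖^2 := by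
          apply Finset.sum_congr rfl; intro i _
          simp only [Finset.mul_sum]
          rw [Finset.sum_comm]
          apply Finset.sum_congr rfl; intro j _
          apply Finset.sum_congr rfl; intro x _
          apply Finset.sum_congr rfl; intro y _
          ring
      _ = S := hreal_ww
  have h_ww : ⟪w, w⟫_ℂ = (S : ℂ) := by
    nth_rewrite 1 [hw]
    rw [sum_inner]
    simp only [sum_inner, inner_smul_left, Complex.conj_ofReal, hPw]
    rw [← hreal_ww2]
    push_cast
    rfl
  set c : ℂ := (((d:ℝ)⁻¹ : ℝ) : ℂ) with hc
  have hcconj : (starRingEnd ℂ) c = c := by rw [hc]; exact Complex.conj_ofReal _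
  set u := a - c • b0 - w with hu
  have hexp : ⟪u,u⟫_ℂ = ⟪a,a⟫_ℂ - c * ⟪a,b0⟫_ℂ - ⟪a,w⟫_ℂ - c * ⟪b0,a⟫_ℂ
      + c * c * ⟪b0,b0⟫_ℂ + c * ⟪b0,w⟫_ℂ - ⟪w,a⟫_ℂ + c * ⟪w,b0⟫_ℂ + ⟪w,w⟫_ℂ := by
    rw [hu]
    simp only [inner_sub_left, inner_sub_right, inner_smul_left, inner_smul_right, hcconj]
    ring
  have hA1 : ∑ i, ∑ x, q i x * p i x = S := by
    rw [hS]
    apply Finset.sum_congr rfl; intro i _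
    have h5 : ∀ x : Fin d, q i x * p i x = q i x^2 + q i x * (1/d) := by
      intro x; simp only [hqdef]; ring
    rw [Finset.sum_congr rfl (fun x _ => h5 x), Finset.sum_add_distrib, ← Finset.sum_mul, hq0]
    ring
  have hval : ⟪u,u⟫_ℂ = ⟪a,a⟫_ℂ - c - (S:ℂ) := by
    rw [hexp, h_ab, h_ba, h_bb, h_aw, h_wa, h_bw, h_wb, h_ww, hA1, hc]
    have hC : ((d:ℝ):ℂ) ≠ 0 := by exact_mod_cast hd0
    push_cast
    field_simp
    ring
  have hTle : (⟪a,a⟫_ℂ).re ≤ 1 := by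
    have h1 : ⟪a,a⟫_ℂ = LinearMap.trace ℂ _ (ρ ∘ₗ ρ) := by
      rw [ha, aux_vec, aux_trace e (ρ ∘ₗ ρ)]
      apply Finset.sum_congr rfl; intro l _
      rw [LinearMap.comp_apply, ← hsym (e l) (ρ (e l))]
    rw [h1]; exact aux_purity ρ hsym hpos htr
  have hSle : S ≤ 1 - 1/d := by
    have h0 : 0 ≤ (⟪u,u⟫_ℂ).re := by
      have := inner_self_nonneg (𝕜 := ℂ) (x := u)
      simpa using this
    rw [hval] at h0
    have hcre : c.re = (d:ℝ)⁻¹ := by rw [hc]; exact Complex.ofReal_re _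
    simp only [Complex.sub_re, Complex.ofReal_re, hcre] at h0
    rw [one_div]
    linarith
  have hfinal : ∑ i, ∑ x, (p i x)^2 = S + ((d:ℝ)+1)*(1/d) := by
    calc ∑ i, ∑ x, p i x ^2
        = ∑ i : Fin (d+1), ((∑ x, q i x^2) + 1/d) := by
          apply Finset.sum_congr rfl; intro i _
          have h6 : ∀ x : Fin d, p i x ^2 = q i x^2 + (2/d) * q i x + 1/d^2 := by
            intro x; simp only [hqdef]; ring
          rw [Finset.sum_congr rfl (fun x _ => h6 x), Finset.sum_add_distrib,
            Finset.sum_add_distrib, ← Finset.mul_sum, hq0, mul_zero, add_zero]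
          congr 1
          rw [Finset.sum_const, Finset.card_fin, nsmul_eq_mul]
          field_simp
      _ = S + ((d:ℝ)+1)*(1/d) := by
          rw [Finset.sum_add_distrib, ← hS, Finset.sum_const, Finset.card_fin, nsmul_eq_mul]
          push_cast
          ring
  have hgoal : ∑ i : Fin (d+1), ∑ x : Fin d, (⟪B i x, ρ (B i x)⟫_ℂ).re ^ 2
      = ∑ i, ∑ x, p i x ^ 2 := rfl
  rw [hgoal, hfinal]
  have h7 : ((d:ℝ)+1)*(1/d) = 1 + 1/d := by field_simp
  linarith

-- Jensen: ∑ p log₂ p ≤ log₂ (∑ p²)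
lemma aux_jensen {n : ℕ} (p : Fin n → ℝ) (h0 : ∀ x, 0 ≤ p x) (h1 : ∑ x, p x = 1) :
    ∑ x, p x * Real.logb 2 (p x) ≤ Real.logb 2 (∑ x, p x ^ 2) := by
  have hlog2 : (0:ℝ) < Real.log 2 := Real.log_pos (by norm_num)
  simp only [Real.logb, mul_div_assoc]
  rw [show ∑ x, p x * (Real.log (p x) / Real.log 2) = (∑ x, p x * Real.log (p x)) / Real.log 2 by
    rw [Finset.sum_div]; congr 1; ext x; ring]
  rw [div_le_div_iff_of_pos_right hlog2]
  -- Jensen on concave log, over the support of p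
  set t := Finset.univ.filter (fun x => p x ≠ 0) with ht
  have hsum_t : ∑ x ∈ t, p x = 1 := by
    rw [← h1]
    exact Finset.sum_filter_ne_zero _
  have hmem : ∀ x ∈ t, p x ∈ Set.Ioi (0:ℝ) := by
    intro x hx
    simp only [ht, Finset.mem_filter] at hx
    exact lt_of_le_of_ne (h0 x) (Ne.symm hx.2)
  have hjen := strictConcaveOn_log_Ioi.concaveOn.le_map_sum
    (fun x hx => h0 x) hsum_t hmem
  have h₁ : ∑ x, p x * Real.log (p x) = ∑ x ∈ t, p x • Real.log (p x) := by
    rw [eq_comm]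
    apply Finset.sum_subset (Finset.subset_univ t)
    intro x _ hx
    simp only [ht, Finset.mem_filter, Finset.mem_univ, true_and, not_not] at hx
    simp [hx]
  have h₂ : ∑ x ∈ t, p x • p x = ∑ x, p x ^ 2 := by
    simp only [smul_eq_mul, ← sq]
    apply Finset.sum_subset (Finset.subset_univ t)
    intro x _ hx
    simp only [ht, Finset.mem_filter, Finset.mem_univ, true_and, not_not] at hx
    simp [hx]
  rw [h₁]
  calc ∑ x ∈ t, p x • Real.log (p x) ≤ Real.log (∑ x ∈ t, p x • p x) := hjen
    _ = Real.log (∑ x, p x ^ 2) := by rw [h₂]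


/-- Entropic uncertainty relation for a full set of `d+1` mutually unbiased bases of `ℂ^d`:
the average Shannon entropy (base 2) of the measurement outcome distributions is at least
`log₂(d+1) - 1` for every density operator `ρ`. -/
theorem stmt_10 (d : ℕ) (hd : 1 ≤ d)
    (B : Fin (d + 1) → OrthonormalBasis (Fin d) ℂ (EuclideanSpace ℂ (Fin d)))
    (hMUB : ∀ i j, i ≠ j → ∀ x y, ‖⟪B i x, B j y⟫_ℂ‖ ^ 2 = 1 / d)
    (ρ : EuclideanSpace ℂ (Fin d) →ₗ[ℂ] EuclideanSpace ℂ (Fin d))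
    (hsym : LinearMap.IsSymmetric ρ)
    (hpos : ∀ v, 0 ≤ (⟪v, ρ v⟫_ℂ).re)
    (htr : LinearMap.trace ℂ _ ρ = 1) :
    (1 / ((d : ℝ) + 1)) *
        ∑ i : Fin (d + 1),
          (- ∑ x : Fin d, (⟪B i x, ρ (B i x)⟫_ℂ).re * Real.logb 2 (⟪B i x, ρ (B i x)⟫_ℂ).re)
      ≥ Real.logb 2 ((d : ℝ) + 1) - 1 := by
  have hd1 : (0:ℝ) < (d:ℝ) + 1 := by positivity
  have hlog2 : (0:ℝ) < Real.log 2 := Real.log_pos (by norm_num)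
  set p : Fin (d+1) → Fin d → ℝ := fun i x => (⟪B i x, ρ (B i x)⟫_ℂ).re with hpdef
  have hp0 : ∀ i x, 0 ≤ p i x := fun i x => hpos _
  have hp1 : ∀ i, ∑ x, p i x = 1 := by
    intro i
    have h := aux_trace (B i) ρ
    rw [htr] at h
    have h2 := congrArg Complex.re h
    rw [Complex.re_sum] at h2
    simp only [hpdef]
    simpa using h2.symm
  set c : Fin (d+1) → ℝ := fun i => ∑ x, p i x ^ 2 with hcdef
  have hc_pos : ∀ i, 0 < c i := by
    intro i
    have hex : ∃ x, p i x ≠ 0 := by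
      by_contra h
      push_neg at h
      have h1 := hp1 i
      rw [Finset.sum_congr rfl (fun x _ => h x)] at h1
      simp at h1
    obtain ⟨x, hx⟩ := hex
    exact Finset.sum_pos' (fun y _ => sq_nonneg _)
      ⟨x, Finset.mem_univ x, pow_pos ((hp0 i x).lt_of_ne (Ne.symm hx)) 2⟩
  have hcsum : ∑ i, c i ≤ 2 := aux_mub hd B hMUB ρ hsym hpos htr
  have hH : ∀ i, -Real.logb 2 (c i) ≤ -∑ x, p i x * Real.logb 2 (p i x) :=
    fun i => neg_le_neg (aux_jensen (p i) (hp0 i) (hp1 i))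
  set M : ℝ := ∑ i : Fin (d+1), (1/((d:ℝ)+1)) * c i with hM
  have hM_pos : 0 < M := by
    rw [hM]
    exact Finset.sum_pos (fun i _ => mul_pos (by positivity) (hc_pos i))
      ⟨0, Finset.mem_univ 0⟩
  have hM_le : M ≤ 2/((d:ℝ)+1) := by
    rw [hM, ← Finset.mul_sum]
    calc (1/((d:ℝ)+1)) * ∑ i, c i ≤ (1/((d:ℝ)+1)) * 2 :=
          mul_le_mul_of_nonneg_left hcsum (by positivity)
      _ = 2/((d:ℝ)+1) := by ring
  have hwsum : ∑ _i : Fin (d+1), (1/((d:ℝ)+1)) = 1 := by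
    rw [Finset.sum_const, Finset.card_fin, nsmul_eq_mul]
    push_cast
    field_simp
  have hjen2 : ∑ i : Fin (d+1), (1/((d:ℝ)+1)) * Real.log (c i) ≤ Real.log M := by
    have h := strictConcaveOn_log_Ioi.concaveOn.le_map_sum (t := Finset.univ)
      (w := fun _ : Fin (d+1) => 1/((d:ℝ)+1)) (p := c)
      (fun i _ => by positivity) hwsum (fun i _ => hc_pos i)
    simp only [smul_eq_mul] at h
    rw [hM]
    exact h
  show (1 / ((d : ℝ) + 1)) * ∑ i : Fin (d + 1),
      (- ∑ x : Fin d, p i x * Real.logb 2 (p i x)) ≥ Real.logb 2 ((d : ℝ) + 1) - 1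
  calc (1 / ((d:ℝ) + 1)) * ∑ i : Fin (d + 1), (- ∑ x : Fin d, p i x * Real.logb 2 (p i x))
      ≥ (1/((d:ℝ)+1)) * ∑ i, (-Real.logb 2 (c i)) :=
        mul_le_mul_of_nonneg_left (Finset.sum_le_sum (fun i _ => hH i)) (by positivity)
    _ = -(∑ i, (1/((d:ℝ)+1)) * Real.log (c i)) / Real.log 2 := by
        simp only [Real.logb]
        rw [Finset.mul_sum, neg_div, Finset.sum_div, ← Finset.sum_neg_distrib]
        apply Finset.sum_congr rfl
        intro i _
        ring
    _ ≥ -(Real.log M)/Real.log 2 :=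
        (div_le_div_iff_of_pos_right hlog2).mpr (neg_le_neg hjen2)
    _ ≥ -(Real.log (2/((d:ℝ)+1)))/Real.log 2 :=
        (div_le_div_iff_of_pos_right hlog2).mpr
          (neg_le_neg (Real.log_le_log hM_pos hM_le))
    _ = Real.logb 2 ((d:ℝ)+1) - 1 := by
        rw [show -(Real.log (2/((d:ℝ)+1)))/Real.log 2 = -Real.logb 2 (2/((d:ℝ)+1)) from by
          rw [Real.logb]; ring]
        rw [Real.logb_div (by norm_num) (ne_of_gt hd1)]
        rw [Real.logb_self_eq_one (by norm_num)]
        ring
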